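/- Let F be the multilinear extension of a k-submodular function. If x ≤ y coordinatewise in the polytope P, then ∂F(x)/∂x_{i,j} ≥ ∂F(y)/∂x_{i,j} for all i ∈ [n] and j ∈ [k] (the gradient is antitone). -/

import Mathlib

open Finset

def kmeet {V : Type*} {k : ℕ} (S T : V → Option (Fin k)) : V → Option (Fin k) :=
  fun e => if S e = T e then S e else none

def kjoin {V : Type*} {k : ℕ} (S T : V → Option (Fin k)) : V → Option (Fin k) :=
  fun e => match S e, T e with
  | none, t => t
  | some i, none => some i
  | some i, some j => if i = j then some i else none

def KSubmodular {V : Type*} {k : ℕ} (f : (V → Option (Fin k)) → ℝ) : Prop :=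
  ∀ S T, f (kmeet S T) + f (kjoin S T) ≤ f S + f T

/-- The multilinear extension of a `k`-submodular function on ground set `Fin n`. -/
def mlext {n k : ℕ} (f : (Fin n → Option (Fin k)) → ℝ) (x : Fin n → Fin k → ℝ) : ℝ :=
  ∑ S : Fin n → Option (Fin k), f S *
    ∏ i, (S i).elim (1 - ∑ j, x i j) (fun j => x i j)

/-- Update the coordinate `(i,j)` of `x` to the value `t`. -/
def upd {n k : ℕ} (x : Fin n → Fin k → ℝ) (i : Fin n) (j : Fin k) (t : ℝ) :
    Fin n → Fin k → ℝ :=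
  fun i' j' => if i' = i ∧ j' = j then t else x i' j'

/-- The partial derivative `∂F/∂x_{i,j}` of the multilinear extension at `x`. -/
noncomputable def pderivF {n k : ℕ} (f : (Fin n → Option (Fin k)) → ℝ)
    (i : Fin n) (j : Fin k) (x : Fin n → Fin k → ℝ) : ℝ :=
  deriv (fun t => mlext f (upd x i j t)) (x i j)

/-- Membership in the polytope `P = {x ∈ [0,1]^{n×k} : ∑_j x_{i,j} ≤ 1 ∀ i}`. -/
def inP {n k : ℕ} (x : Fin n → Fin k → ℝ) : Prop :=
  (∀ i j, 0 ≤ x i j ∧ x i j ≤ 1) ∧ ∀ i, ∑ j, x i j ≤ 1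


namespace MLEaux
variable {n k : ℕ}

def fac (x : Fin n → Fin k → ℝ) (S : Fin n → Option (Fin k)) (i' : Fin n) : ℝ :=
  (S i').elim (1 - ∑ j', x i' j') (fun j'' => x i' j'')

def cf {k : ℕ} (j : Fin k) (a : Option (Fin k)) : ℝ :=
  a.elim (-1) (fun j'' => if j'' = j then 1 else 0)

def pd (f : (Fin n → Option (Fin k)) → ℝ) (i : Fin n) (j : Fin k)
    (x : Fin n → Fin k → ℝ) : ℝ :=
  ∑ S : Fin n → Option (Fin k), f S * cf j (S i) * ∏ i' ∈ univ.erase i, fac x S i'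

lemma upd_apply_ne {x : Fin n → Fin k → ℝ} {i i' : Fin n} {j : Fin k} {t : ℝ}
    (h : i' ≠ i) (j' : Fin k) : upd x i j t i' j' = x i' j' := by
  simp [upd, h]

lemma fac_upd_ne {x : Fin n → Fin k → ℝ} {i i' : Fin n} {j : Fin k} {t : ℝ}
    (S : Fin n → Option (Fin k)) (h : i' ≠ i) : fac (upd x i j t) S i' = fac x S i' := by
  unfold fac
  cases S i' <;> simp [upd_apply_ne h]

lemma fac_nonneg {x : Fin n → Fin k → ℝ} (hx : inP x) (S : Fin n → Option (Fin k))
    (i' : Fin n) : 0 ≤ fac x S i' := by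
  unfold fac
  cases S i' with
  | none => simpa using (hx.2 i')
  | some j'' => exact (hx.1 i' j'').1

lemma fac_congr {x : Fin n → Fin k → ℝ} {S T : Fin n → Option (Fin k)} {i' : Fin n}
    (h : S i' = T i') : fac x S i' = fac x T i' := by
  unfold fac; rw [h]

/-- sum over `Option (Fin k)` against the coefficient `cf` -/
lemma cf_sum (jj : Fin k) (G : Option (Fin k) → ℝ) :
    ∑ a : Option (Fin k), cf jj a * G a = G (some jj) - G none := by
  rw [Fintype.sum_option]
  have : ∀ j'' : Fin k, cf jj (some j'') * G (some j'') =
      if j'' = jj then G (some j'') else 0 := by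
    intro j''; simp [cf, ite_mul]
  rw [Finset.sum_congr rfl (fun j'' _ => this j'')]
  rw [Finset.sum_ite_eq' univ jj (fun j'' => G (some j''))]
  simp [cf]
  ring

lemma sum_split (i₀ : Fin n) (g : (Fin n → Option (Fin k)) → ℝ) :
    ∑ S : Fin n → Option (Fin k), g S =
    ∑ S : Fin n → Option (Fin k),
      if S i₀ = none then ∑ b : Option (Fin k), g (Function.update S i₀ b) else 0 := by
  rw [← Finset.sum_fiberwise univ (fun S => S i₀) g, ← Finset.sum_filter,
    Finset.sum_comm]
  refine Finset.sum_congr rfl fun b _ => ?_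
  refine Finset.sum_nbij' (fun S => Function.update S i₀ none)
    (fun S => Function.update S i₀ b) ?_ ?_ ?_ ?_ ?_
  · intro S hS; simp
  · intro S hS; simp
  · intro S hS
    simp only [mem_filter, mem_univ, true_and] at hS
    show Function.update (Function.update S i₀ none) i₀ b = S
    rw [Function.update_idem, ← hS, Function.update_eq_self]
  · intro S hS
    simp only [mem_filter, mem_univ, true_and] at hS
    show Function.update (Function.update S i₀ b) i₀ none = S
    rw [Function.update_idem, ← hS, Function.update_eq_self]
  · intro S hS
    simp only [mem_filter, mem_univ, true_and] at hS
    show g S = g (Function.update (Function.update S i₀ none) i₀ b)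
    rw [Function.update_idem, ← hS, Function.update_eq_self]

/-- Key second-order inequality: the "mixed second derivative" sum is nonpositive. -/
lemma ssum_nonpos (f : (Fin n → Option (Fin k)) → ℝ) (hf : KSubmodular f)
    {i i₀ : Fin n} (j j₀ : Fin k) (hne : i₀ ≠ i)
    (z : Fin n → Fin k → ℝ) (hz : inP z) :
    ∑ S : Fin n → Option (Fin k),
      f S * cf j (S i) * cf j₀ (S i₀) * ∏ i' ∈ (univ.erase i).erase i₀, fac z S i' ≤ 0 := by
  set g : (Fin n → Option (Fin k)) → ℝ := fun S =>
    f S * cf j (S i) * cf j₀ (S i₀) * ∏ i' ∈ (univ.erase i).erase i₀, fac z S i' with hg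
  have hQdep : ∀ (S T : Fin n → Option (Fin k)),
      (∀ i' : Fin n, i' ≠ i → i' ≠ i₀ → S i' = T i') →
      (∏ i' ∈ (univ.erase i).erase i₀, fac z S i')
        = ∏ i' ∈ (univ.erase i).erase i₀, fac z T i' := by
    intro S T h
    refine Finset.prod_congr rfl fun i' hi' => ?_
    simp only [mem_erase, mem_univ, and_true] at hi'
    exact fac_congr (h i' hi'.2 hi'.1)
  rw [sum_split i g, sum_split i₀
    (fun S => if S i = none then ∑ a : Option (Fin k), g (Function.update S i a) else 0)]
  apply Finset.sum_nonpos
  intro S _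
  by_cases hSi₀ : S i₀ = none
  · rw [if_pos hSi₀]
    by_cases hSi : S i = none
    · have heval : ∀ b : Option (Fin k),
          (if (Function.update S i₀ b) i = none then
            ∑ a : Option (Fin k), g (Function.update (Function.update S i₀ b) i a) else 0)
          = ∑ a : Option (Fin k), g (Function.update (Function.update S i₀ b) i a) := by
        intro b
        rw [if_pos]
        rw [Function.update_of_ne (Ne.symm hne) _ _, hSi]
      rw [Finset.sum_congr rfl fun b _ => heval b]
      -- now the double sum
      set Q : ℝ := ∏ i' ∈ (univ.erase i).erase i₀, fac z S i' with hQ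
      set u2 : Option (Fin k) → Option (Fin k) → (Fin n → Option (Fin k)) :=
        fun a b => Function.update (Function.update S i₀ b) i a with hu2
      have hgval : ∀ a b, g (u2 a b) = cf j a * (cf j₀ b * (f (u2 a b) * Q)) := by
        intro a b
        rw [hg]
        simp only []
        have h1 : (u2 a b) i = a := by rw [hu2]; simp
        have h2 : (u2 a b) i₀ = b := by
          rw [hu2]; simp only []
          rw [Function.update_of_ne hne, Function.update_self]
        have h3 : (∏ i' ∈ (univ.erase i).erase i₀, fac z (u2 a b) i') = Q := by
          rw [hQ]
          refine hQdep _ _ fun i' h h' => ?_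
          rw [hu2]; simp only []
          rw [Function.update_of_ne h, Function.update_of_ne h']
        rw [h1, h2, h3]; ring
      have hstep1 : ∀ b : Option (Fin k),
          ∑ a : Option (Fin k), g (u2 a b)
            = cf j₀ b * ((f (u2 (some j) b) - f (u2 none b)) * Q) := by
        intro b
        rw [Finset.sum_congr rfl fun a _ => hgval a b]
        rw [cf_sum j (fun a => cf j₀ b * (f (u2 a b) * Q))]
        ring
      rw [Finset.sum_congr rfl fun b _ => hstep1 b]
      rw [cf_sum j₀ (fun b => (f (u2 (some j) b) - f (u2 none b)) * Q)]
      -- simplify the none-updates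
      have hnone : ∀ b, u2 none b = Function.update S i₀ b := by
        intro b
        rw [hu2]; simp only []
        conv_lhs => rw [show (none : Option (Fin k)) = (Function.update S i₀ b) i by
          rw [Function.update_of_ne (Ne.symm hne), hSi]]
        rw [Function.update_eq_self]
      have hSnone : Function.update S i₀ none = S := by
        conv_lhs => rw [show (none : Option (Fin k)) = S i₀ from hSi₀.symm]
        rw [Function.update_eq_self]
      have hbnone : u2 (some j) none = Function.update S i (some j) := by
        rw [hu2]; simp only [hSnone]
      rw [hnone (some j₀), hnone none, hbnone, hSnone]
      -- apply k-submodularity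
      have hmeet : kmeet (Function.update S i (some j)) (Function.update S i₀ (some j₀)) = S := by
        funext e
        unfold kmeet
        by_cases he : e = i
        · subst he
          rw [Function.update_self, Function.update_of_ne (Ne.symm hne)]
          simp [hSi]
        · by_cases he' : e = i₀
          · subst he'
            rw [Function.update_of_ne he, Function.update_self]
            simp [hSi₀]
          · rw [Function.update_of_ne he, Function.update_of_ne he']
            simp
      have hjoin : kjoin (Function.update S i (some j)) (Function.update S i₀ (some j₀))
          = u2 (some j) (some j₀) := by
        funext e
        rw [hu2]
        simp only []
        unfold kjoin
        by_cases he : e = i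
        · subst he
          rw [Function.update_self, Function.update_of_ne (Ne.symm hne), hSi,
            Function.update_self]
        · by_cases he' : e = i₀
          · subst he'
            rw [Function.update_of_ne he, Function.update_self,
              Function.update_of_ne he, Function.update_self, hSi₀]
          · rw [Function.update_of_ne he, Function.update_of_ne he',
              Function.update_of_ne he, Function.update_of_ne he']
            cases hSe : S e with
            | none => rfl
            | some c => simp
      have := hf (Function.update S i (some j)) (Function.update S i₀ (some j₀))
      rw [hmeet, hjoin] at this
      have hQnn : 0 ≤ Q := by
        rw [hQ]; exact Finset.prod_nonneg fun i' _ => fac_nonneg hz S i'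
      have hbr : f (u2 (some j) (some j₀)) - f (Function.update S i₀ (some j₀))
          - (f (Function.update S i (some j)) - f S) ≤ 0 := by linarith
      calc (f (u2 (some j) (some j₀)) - f (Function.update S i₀ (some j₀))) * Q
            - (f (Function.update S i (some j)) - f S) * Q
          = (f (u2 (some j) (some j₀)) - f (Function.update S i₀ (some j₀))
              - (f (Function.update S i (some j)) - f S)) * Q := by ring
        _ ≤ 0 := mul_nonpos_iff.mpr (Or.inr ⟨hbr, hQnn⟩)
    · have : ∀ b : Option (Fin k),
          (if (Function.update S i₀ b) i = none then
            ∑ a : Option (Fin k), g (Function.update (Function.update S i₀ b) i a) else 0) = 0 := by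
        intro b
        rw [if_neg]
        rw [Function.update_of_ne (Ne.symm hne)]
        exact hSi
      rw [Finset.sum_congr rfl fun b _ => this b]
      simp
  · rw [if_neg hSi₀]



lemma hasDerivAt_fac (x : Fin n → Fin k → ℝ) (i : Fin n) (j : Fin k)
    (S : Fin n → Option (Fin k)) (t : ℝ) :
    HasDerivAt (fun t => fac (upd x i j t) S i) (cf j (S i)) t := by
  unfold fac cf
  cases hS : S i with
  | none =>
    simp only [Option.elim]
    have h : ∀ t : ℝ, (∑ j', upd x i j t i j') = (fun t : ℝ => ∑ j', if j' = j then t else x i j') t := by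
      intro t; simp [upd]
    have hd : HasDerivAt (fun t : ℝ => ∑ j' : Fin k, if j' = j then t else x i j')
        (∑ j' : Fin k, if j' = j then (1:ℝ) else 0) t := by
      apply HasDerivAt.fun_sum
      intro j' _
      by_cases hj : j' = j
      · simpa [hj] using (hasDerivAt_id' (𝕜 := ℝ) t)
      · simpa [hj] using (hasDerivAt_const t (x i j'))
    have : (∑ j' : Fin k, if j' = j then (1:ℝ) else 0) = 1 := by simp
    rw [this] at hd
    have := (hasDerivAt_const t (1:ℝ)).fun_sub hd
    simpa [h] using this
  | some j'' =>
    simp only [Option.elim]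
    by_cases hj : j'' = j
    · simpa [upd, hj] using (hasDerivAt_id' (𝕜 := ℝ) t)
    · simpa [upd, hj] using (hasDerivAt_const t (x i j''))

lemma pderivF_eq_pd (f : (Fin n → Option (Fin k)) → ℝ) (i : Fin n) (j : Fin k)
    (x : Fin n → Fin k → ℝ) : pderivF f i j x = pd f i j x := by
  have hfun : (fun t => mlext f (upd x i j t)) =
      fun t => ∑ S : Fin n → Option (Fin k),
        f S * (fac (upd x i j t) S i * ∏ i' ∈ univ.erase i, fac x S i') := by
    funext t
    unfold mlext
    refine sum_congr rfl fun S _ => ?_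
    rw [show (∏ i'' , (S i'').elim (1 - ∑ j', upd x i j t i'' j') (fun j'' => upd x i j t i'' j''))
        = ∏ i'', fac (upd x i j t) S i'' from rfl]
    rw [← Finset.mul_prod_erase univ _ (mem_univ i)]
    congr 1
    congr 1
    exact prod_congr rfl fun i' hi' => fac_upd_ne S (mem_erase.mp hi').1
  have hder : HasDerivAt (fun t => mlext f (upd x i j t)) (pd f i j x) (x i j) := by
    rw [hfun]
    have := HasDerivAt.fun_sum (u := (univ : Finset (Fin n → Option (Fin k))))
      (A := fun S t => f S * (fac (upd x i j t) S i * ∏ i' ∈ univ.erase i, fac x S i'))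
      (A' := fun S => f S * (cf j (S i) * ∏ i' ∈ univ.erase i, fac x S i'))
      (x := x i j)
      (fun S _ => (((hasDerivAt_fac x i j S (x i j)).mul_const _).const_mul (f S)))
    convert this using 1
    · rfl
    · rfl
    unfold pd
    exact sum_congr rfl fun S _ => by ring
  rw [pderivF]
  exact hder.deriv

lemma pd_congr (f : (Fin n → Option (Fin k)) → ℝ) (i : Fin n) (j : Fin k)
    {z z' : Fin n → Fin k → ℝ}
    (h : ∀ i', i' ≠ i → ∀ j', z' i' j' = z i' j') : pd f i j z' = pd f i j z := by
  unfold pd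
  refine sum_congr rfl fun S _ => ?_
  congr 1
  refine prod_congr rfl fun i' hi' => ?_
  have hi := (mem_erase.mp hi').1
  unfold fac
  cases S i' with
  | none => simp only [Option.elim]; rw [sum_congr rfl fun j' _ => h i' hi j']
  | some j'' => simp only [Option.elim]; exact h i' hi j''

lemma pd_step (f : (Fin n → Option (Fin k)) → ℝ) (hf : KSubmodular f)
    {i i₀ : Fin n} (j j₀ : Fin k) (hne : i₀ ≠ i)
    (z : Fin n → Fin k → ℝ) (hz : inP z) {t : ℝ} (hzt : z i₀ j₀ ≤ t) :
    pd f i j (upd z i₀ j₀ t) ≤ pd f i j z := by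
  set z' := upd z i₀ j₀ t with hz'
  have hi₀ : i₀ ∈ univ.erase i := mem_erase.mpr ⟨hne, mem_univ _⟩
  have hfac : ∀ S : Fin n → Option (Fin k),
      fac z' S i₀ = fac z S i₀ + cf j₀ (S i₀) * (t - z i₀ j₀) := by
    intro S
    unfold fac cf
    cases hS : S i₀ with
    | none =>
      simp only [Option.elim]
      have h1 : ∀ j', z' i₀ j' = z i₀ j' + (if j' = j₀ then t - z i₀ j₀ else 0) := by
        intro j'
        rw [hz']
        by_cases h : j' = j₀ <;> simp [upd, h]
      have h2 : ∑ j', z' i₀ j' = (∑ j', z i₀ j') + (t - z i₀ j₀) := by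
        rw [Finset.sum_congr rfl fun j' _ => h1 j', Finset.sum_add_distrib,
          Finset.sum_ite_eq' univ j₀ (fun _ => t - z i₀ j₀)]
        simp
      rw [h2]; ring
    | some j'' =>
      simp only [Option.elim]
      by_cases h : j'' = j₀
      · subst h; rw [hz']; simp [upd]
      · rw [hz']; simp [upd, h]
  have hprod : ∀ S : Fin n → Option (Fin k),
      (∏ i' ∈ univ.erase i, fac z' S i') =
      fac z' S i₀ * ∏ i' ∈ (univ.erase i).erase i₀, fac z S i' := by
    intro S
    rw [← Finset.mul_prod_erase (univ.erase i) (fac z' S) hi₀]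
    congr 1
    exact prod_congr rfl fun i' hi' => fac_upd_ne S (mem_erase.mp hi').1
  have key : ∀ S : Fin n → Option (Fin k),
      f S * cf j (S i) * ∏ i' ∈ univ.erase i, fac z' S i'
      = f S * cf j (S i) * ∏ i' ∈ univ.erase i, fac z S i'
        + (t - z i₀ j₀) * (f S * cf j (S i) * cf j₀ (S i₀)
            * ∏ i' ∈ (univ.erase i).erase i₀, fac z S i') := by
    intro S
    rw [hprod S, hfac S, ← Finset.mul_prod_erase (univ.erase i) (fac z S) hi₀]
    ring
  have hexp : pd f i j z' = pd f i j z + (t - z i₀ j₀) *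
      ∑ S : Fin n → Option (Fin k), f S * cf j (S i) * cf j₀ (S i₀)
        * ∏ i' ∈ (univ.erase i).erase i₀, fac z S i' := by
    unfold pd
    rw [Finset.sum_congr rfl fun S _ => key S, Finset.sum_add_distrib, ← Finset.mul_sum]
  have h1 := ssum_nonpos f hf j j₀ hne z hz
  have h2 : 0 ≤ t - z i₀ j₀ := by linarith
  have h3 : (t - z i₀ j₀) *
      (∑ S : Fin n → Option (Fin k), f S * cf j (S i) * cf j₀ (S i₀)
        * ∏ i' ∈ (univ.erase i).erase i₀, fac z S i') ≤ 0 :=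
    mul_nonpos_iff.mpr (Or.inl ⟨h2, h1⟩)
  linarith [hexp.le, hexp.ge]

end MLEaux

theorem mlext_gradient_antitone {n k : ℕ}
    (f : (Fin n → Option (Fin k)) → ℝ) (hf : KSubmodular f)
    (x y : Fin n → Fin k → ℝ) (hx : inP x) (hy : inP y)
    (hxy : ∀ i j, x i j ≤ y i j) (i : Fin n) (j : Fin k) :
    pderivF f i j y ≤ pderivF f i j x := by
  classical
  rw [MLEaux.pderivF_eq_pd, MLEaux.pderivF_eq_pd]
  set mix : Finset (Fin n × Fin k) → (Fin n → Fin k → ℝ) :=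
    fun A i' j' => if (i', j') ∈ A then y i' j' else x i' j' with hmix
  have hmixP : ∀ A, inP (mix A) := by
    intro A
    constructor
    · intro i' j'
      by_cases h : (i', j') ∈ A
      · simp only [hmix, if_pos h]; exact hy.1 i' j'
      · simp only [hmix, if_neg h]; exact hx.1 i' j'
    · intro i'
      have : ∑ j', mix A i' j' ≤ ∑ j', y i' j' := by
        refine Finset.sum_le_sum fun j' _ => ?_
        by_cases h : (i', j') ∈ A
        · simp only [hmix, if_pos h]; exact le_refl _
        · simp only [hmix, if_neg h]; exact hxy i' j'
      exact le_trans this (hy.2 i')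
  have main : ∀ A : Finset (Fin n × Fin k), MLEaux.pd f i j (mix A) ≤ MLEaux.pd f i j x := by
    intro A
    induction A using Finset.induction_on with
    | empty =>
      have h : mix ∅ = x := by funext i' j'; simp [hmix]
      rw [h]
    | @insert a A ha ih =>
      obtain ⟨i₀, j₀⟩ := a
      have hins : mix (insert (i₀, j₀) A) = upd (mix A) i₀ j₀ (y i₀ j₀) := by
        funext i' j'
        simp only [hmix, upd]
        by_cases hc : i' = i₀ ∧ j' = j₀
        · obtain ⟨rfl, rfl⟩ := hc; simp
        · rw [if_neg hc]
          by_cases hA : (i', j') ∈ A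
          · rw [if_pos (Finset.mem_insert_of_mem hA), if_pos hA]
          · rw [if_neg hA, if_neg ?_]
            intro h
            rcases Finset.mem_insert.mp h with h' | h'
            · exact hc (by simpa [Prod.ext_iff] using h')
            · exact hA h'
      rw [hins]
      by_cases hii : i₀ = i
      · have heq : MLEaux.pd f i j (upd (mix A) i₀ j₀ (y i₀ j₀)) = MLEaux.pd f i j (mix A) :=
          MLEaux.pd_congr f i j (fun i' hi' j' =>
            MLEaux.upd_apply_ne (by rw [hii]; exact hi') j')
        rw [heq]; exact ih
      · refine le_trans (MLEaux.pd_step f hf j j₀ hii (mix A) (hmixP A) ?_) ih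
        have : mix A i₀ j₀ = x i₀ j₀ := by simp [hmix, ha]
        rw [this]; exact hxy i₀ j₀
  have hyuniv : mix univ = y := by funext i' j'; simp [hmix]
  calc MLEaux.pd f i j y = MLEaux.pd f i j (mix univ) := by rw [hyuniv]
    _ ≤ MLEaux.pd f i j x := main univ
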